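/- For any bipartite quasi-state ρ on ℂ^{d_A}⊗ℂ^{d_B}, the exact entanglement cost under PPTq operations equals the logarithmic negativity: E^{exact}_{C,PPTq}(ρ) = E_N(ρ), i.e., lim_{n→∞} (1/n) E^{(1)}_{0,C,PPTq}(ρ^{⊗n}) = E_N(ρ). -/

import Mathlib

open scoped BigOperators ComplexOrder

noncomputable section

/-- Bipartite matrices on `ℂ^{IA} ⊗ ℂ^{IB}`, indexed by pairs. -/
abbrev BMat (IA IB : Type) : Type := Matrix (IA × IB) (IA × IB) ℂ

/-- Partial transpose on the `B` system: `(X^{T_B})_{(i,j),(k,l)} = X_{(i,l),(k,j)}`. -/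
def ptB {IA IB : Type} (X : BMat IA IB) : BMat IA IB :=
  fun p q => X (p.1, q.2) (q.1, p.2)

/-- Trace norm `‖X‖₁ = tr √(X† X)`. -/
noncomputable def traceNorm {n : Type} [Fintype n] [DecidableEq n]
    (X : Matrix n n ℂ) : ℝ :=
  (((Matrix.posSemidef_conjTranspose_mul_self X).1.eigenvectorUnitary : Matrix n n ℂ) *
      Matrix.diagonal (((↑) : ℝ → ℂ) ∘ (Real.sqrt ·) ∘
        (Matrix.posSemidef_conjTranspose_mul_self X).1.eigenvalues) *
      (star (Matrix.posSemidef_conjTranspose_mul_self X).1.eigenvectorUnitary :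
        Matrix n n ℂ)).trace.re

namespace Matrix.PosSemidef

/-- square root of a positive semidefinite matrix, in the eigenbasis -/
noncomputable def sqrt {n : Type} [Fintype n] [DecidableEq n] {A : Matrix n n ℂ}
    (hA : A.PosSemidef) : Matrix n n ℂ :=
  (hA.1.eigenvectorUnitary : Matrix n n ℂ) *
    Matrix.diagonal (((↑) : ℝ → ℂ) ∘ (Real.sqrt ·) ∘ hA.1.eigenvalues) *
    (star hA.1.eigenvectorUnitary : Matrix n n ℂ)

open scoped MatrixOrder in
lemma sqrt_eq_CFC {n : Type} [Fintype n] [DecidableEq n] {A : Matrix n n ℂ}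
    (hA : A.PosSemidef) : hA.sqrt = CFC.sqrt A := by
  rw [CFC.sqrt_eq_cfc, cfc_nnreal_eq_real _ A, hA.1.cfc_eq]
  simp only [Matrix.IsHermitian.cfc, Unitary.conjStarAlgAut_apply]
  rw [Matrix.PosSemidef.sqrt]
  congr 3
  funext i
  simp only [Function.comp_apply, Real.coe_sqrt, Real.coe_toNNReal',
    max_eq_left (hA.eigenvalues_nonneg i)]
  rfl

open scoped MatrixOrder in
lemma posSemidef_sqrt {n : Type} [Fintype n] [DecidableEq n] {A : Matrix n n ℂ}
    (hA : A.PosSemidef) : hA.sqrt.PosSemidef := by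
  rw [sqrt_eq_CFC]
  exact Matrix.nonneg_iff_posSemidef.mp (CFC.sqrt_nonneg A)

open scoped MatrixOrder in
lemma sqrt_mul_self {n : Type} [Fintype n] [DecidableEq n] {A : Matrix n n ℂ}
    (hA : A.PosSemidef) : hA.sqrt * hA.sqrt = A := by
  rw [sqrt_eq_CFC]
  exact CFC.sqrt_mul_sqrt_self A (Matrix.nonneg_iff_posSemidef.mpr hA)

open scoped MatrixOrder in
lemma eq_sqrt_of_sq_eq {n : Type} [Fintype n] [DecidableEq n] {A B : Matrix n n ℂ}
    (hA : A.PosSemidef) (hB : B.PosSemidef) (hAB : A ^ 2 = B) : A = hB.sqrt := by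
  rw [sqrt_eq_CFC]
  exact (CFC.sqrt_unique (by rw [← sq]; exact hAB) (Matrix.nonneg_iff_posSemidef.mpr hA)).symm

end Matrix.PosSemidef

open scoped MatrixOrder in
lemma Matrix.posSemidef_iff_eq_transpose_mul_self {n : Type} [Fintype n] [DecidableEq n]
    {A : Matrix n n ℂ} : A.PosSemidef ↔ ∃ B : Matrix n n ℂ, A = B.conjTranspose * B := by
  rw [← Matrix.nonneg_iff_posSemidef, CStarAlgebra.nonneg_iff_eq_star_mul_self]
  rfl

lemma traceNorm_eq_sqrt {n : Type} [Fintype n] [DecidableEq n] (X : Matrix n n ℂ) :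
    traceNorm X = ((Matrix.posSemidef_conjTranspose_mul_self X).sqrt.trace).re := rfl

/-- Operator norm (largest singular value). -/
noncomputable def opNorm {n : Type} [Fintype n] [DecidableEq n] (X : Matrix n n ℂ) : ℝ :=
  ‖Matrix.toEuclideanCLM (𝕜 := ℂ) X‖

/-- Logarithmic negativity `E_N(X) = log₂ ‖X^{T_B}‖₁`. -/
noncomputable def EN {IA IB : Type} [Fintype IA] [Fintype IB] [DecidableEq IA] [DecidableEq IB]
    (X : BMat IA IB) : ℝ :=
  Real.logb 2 (traceNorm (ptB X))

/-- The extension `id_k ⊗ f` of a map on matrices, acting blockwise. -/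
def extMap {I J : Type} (f : Matrix I I ℂ → Matrix J J ℂ) (k : ℕ)
    (M : Matrix (Fin k × I) (Fin k × I) ℂ) : Matrix (Fin k × J) (Fin k × J) ℂ :=
  fun p q => f (fun i i' => M (p.1, i) (q.1, i')) p.2 q.2

/-- A map on matrices is completely positive if all its extensions `id_k ⊗ f`
map positive semidefinite matrices to positive semidefinite matrices. -/
def CompletelyPositive {I J : Type} [Fintype I] [Fintype J]
    (f : Matrix I I ℂ → Matrix J J ℂ) : Prop :=
  ∀ (k : ℕ) (M : Matrix (Fin k × I) (Fin k × I) ℂ), M.PosSemidef → (extMap f k M).PosSemidef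

/-- A PPTq operation: a Hermitian-preserving, trace-preserving linear map `N`
such that `T_{B'} ∘ N ∘ T_B` is completely positive. -/
def IsPPTq {IA IB JA JB : Type} [Fintype IA] [Fintype IB] [Fintype JA] [Fintype JB]
    (N : BMat IA IB →ₗ[ℂ] BMat JA JB) : Prop :=
  (∀ X : BMat IA IB, X.IsHermitian → (N X).IsHermitian) ∧
  (∀ X : BMat IA IB, (N X).trace = X.trace) ∧
  CompletelyPositive (fun X => ptB (N (ptB X)))

/-- A bipartite quasi-state: Hermitian with trace one. -/
def IsQuasiState {IA IB : Type} [Fintype IA] [Fintype IB] (ρ : BMat IA IB) : Prop :=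
  ρ.IsHermitian ∧ ρ.trace = 1

/-- A bipartite quantum state: positive semidefinite with trace one. -/
def IsState {IA IB : Type} [Fintype IA] [Fintype IB] (ρ : BMat IA IB) : Prop :=
  ρ.PosSemidef ∧ ρ.trace = 1

/-- The maximally entangled state `Φ^d = (1/d) ∑_{i,j} |ii⟩⟨jj|`. -/
noncomputable def MES (d : ℕ) : BMat (Fin d) (Fin d) :=
  fun p q => if p.1 = p.2 ∧ q.1 = q.2 then (1 : ℂ) / d else 0

/-- `n`-fold tensor (Kronecker) power, with all `A` factors grouped against all `B` factors. -/
def tensorPow {IA IB : Type} (ρ : BMat IA IB) (n : ℕ) :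
    BMat (Fin n → IA) (Fin n → IB) :=
  fun p q => ∏ i : Fin n, ρ (p.1 i, p.2 i) (q.1 i, q.2 i)

/-- Tensor (Kronecker) product of two bipartite matrices, grouping `A` systems together
and `B` systems together. -/
def tensorMul {IA IB JA JB : Type} (ρ : BMat IA IB) (σ : BMat JA JB) :
    BMat (IA × JA) (IB × JB) :=
  fun p q => ρ (p.1.1, p.2.1) (q.1.1, q.2.1) * σ (p.1.2, p.2.2) (q.1.2, q.2.2)

/-- One-shot exact distillable entanglement under PPTq operations. -/
noncomputable def oneShotDistill {IA IB : Type} [Fintype IA] [Fintype IB]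
    (ρ : BMat IA IB) : ℝ :=
  sSup { x : ℝ | ∃ d : ℕ, 0 < d ∧ x = Real.logb 2 d ∧
    ∃ Λ : BMat IA IB →ₗ[ℂ] BMat (Fin d) (Fin d), IsPPTq Λ ∧ Λ ρ = MES d }

/-- One-shot exact entanglement cost under PPTq operations. -/
noncomputable def oneShotCost {IA IB : Type} [Fintype IA] [Fintype IB]
    (ρ : BMat IA IB) : ℝ :=
  sInf { x : ℝ | ∃ d : ℕ, 0 < d ∧ x = Real.logb 2 d ∧
    ∃ Λ : BMat (Fin d) (Fin d) →ₗ[ℂ] BMat IA IB, IsPPTq Λ ∧ Λ (MES d) = ρ }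

/-- The one-shot distillation error for `n` copies towards `Φ^d`, optimized over PPTq operations. -/
noncomputable def distillErr {IA IB : Type} [Fintype IA] [Fintype IB]
    [DecidableEq IA] [DecidableEq IB] (ρ : BMat IA IB) (n d : ℕ) : ℝ :=
  sInf { e : ℝ | ∃ Λ : BMat (Fin n → IA) (Fin n → IB) →ₗ[ℂ] BMat (Fin d) (Fin d),
    IsPPTq Λ ∧ e = traceNorm (Λ (tensorPow ρ n) - MES d) }

/-- The one-shot dilution error for preparing `n` copies from `Φ^d`, optimized over PPTq operations. -/
noncomputable def costErr {IA IB : Type} [Fintype IA] [Fintype IB]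
    [DecidableEq IA] [DecidableEq IB] (ρ : BMat IA IB) (n d : ℕ) : ℝ :=
  sInf { e : ℝ | ∃ Λ : BMat (Fin d) (Fin d) →ₗ[ℂ] BMat (Fin n → IA) (Fin n → IB),
    IsPPTq Λ ∧ e = traceNorm (tensorPow ρ n - Λ (MES d)) }

/-- Distillable entanglement under PPTq operations (asymptotically vanishing error). -/
noncomputable def EDppt {IA IB : Type} [Fintype IA] [Fintype IB]
    [DecidableEq IA] [DecidableEq IB] (ρ : BMat IA IB) : ℝ :=
  sSup { r : ℝ | Filter.Tendsto (fun n : ℕ => distillErr ρ n (2 ^ ⌊r * n⌋₊))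
    Filter.atTop (nhds 0) }

/-- Entanglement cost under PPTq operations (asymptotically vanishing error). -/
noncomputable def ECppt {IA IB : Type} [Fintype IA] [Fintype IB]
    [DecidableEq IA] [DecidableEq IB] (ρ : BMat IA IB) : ℝ :=
  sInf { r : ℝ | Filter.Tendsto (fun n : ℕ => costErr ρ n (2 ^ ⌈r * n⌉₊))
    Filter.atTop (nhds 0) }

/-- Tempered negativity `N_τ(σ | ρ)`. -/
noncomputable def temperedNeg {IA IB : Type} [Fintype IA] [Fintype IB]
    [DecidableEq IA] [DecidableEq IB] (σ ρ : BMat IA IB) : ℝ :=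
  sSup { t : ℝ | ∃ X : Matrix (IA × IB) (IA × IB) ℂ, X.IsHermitian ∧
    opNorm (ptB X) ≤ 1 ∧ (X * ρ).trace = (opNorm X : ℂ) ∧ (X * σ).trace = (t : ℂ) }

/-- Asymptotic exact conversion rate under PPTq operations. -/
noncomputable def convRate {IA IB JA JB : Type} [Fintype IA] [Fintype IB]
    [Fintype JA] [Fintype JB]
    (ρ : BMat IA IB) (σ : BMat JA JB) : ℝ :=
  sSup { r : ℝ | 0 ≤ r ∧ ∀ᶠ n : ℕ in Filter.atTop,
    ∃ Λ : BMat (Fin n → IA) (Fin n → IB) →ₗ[ℂ]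
          BMat (Fin ⌊r * n⌋₊ → JA) (Fin ⌊r * n⌋₊ → JB),
      IsPPTq Λ ∧ Λ (tensorPow ρ n) = tensorPow σ ⌊r * n⌋₊ }

namespace EC
open Matrix

variable {m : Type} [Fintype m] [DecidableEq m]

/-- functional calculus in the eigenbasis of a Hermitian matrix -/
noncomputable def sfn {X : Matrix m m ℂ} (hX : X.IsHermitian) (f : ℝ → ℝ) : Matrix m m ℂ :=
  (hX.eigenvectorUnitary : Matrix m m ℂ) * diagonal ((↑) ∘ f ∘ hX.eigenvalues) *
    (star hX.eigenvectorUnitary : Matrix m m ℂ)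

lemma sfn_mul {X : Matrix m m ℂ} (hX : X.IsHermitian) (f g : ℝ → ℝ) :
    sfn hX f * sfn hX g = sfn hX (fun x => f x * g x) := by
  set U := (hX.eigenvectorUnitary : Matrix m m ℂ) with hUdef
  set V := (star hX.eigenvectorUnitary : Matrix m m ℂ) with hVdef
  have hU : V * U = 1 := (Matrix.mem_unitaryGroup_iff').mp hX.eigenvectorUnitary.2
  show U * diagonal ((↑) ∘ f ∘ hX.eigenvalues) * V * (U * diagonal ((↑) ∘ g ∘ hX.eigenvalues) * V)
      = U * diagonal ((↑) ∘ (fun x => f x * g x) ∘ hX.eigenvalues) * V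
  have h1 : U * diagonal ((↑) ∘ f ∘ hX.eigenvalues) * V *
      (U * diagonal ((↑) ∘ g ∘ hX.eigenvalues) * V) =
      U * (diagonal ((↑) ∘ f ∘ hX.eigenvalues) * (V * U) *
        diagonal ((↑) ∘ g ∘ hX.eigenvalues)) * V := by
    noncomm_ring
  rw [h1, hU, mul_one, diagonal_mul_diagonal]
  have h2 : (fun i => ((↑) ∘ f ∘ hX.eigenvalues : m → ℂ) i * ((↑) ∘ g ∘ hX.eigenvalues : m → ℂ) i)
      = ((↑) ∘ (fun x => f x * g x) ∘ hX.eigenvalues : m → ℂ) := by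
    funext i; simp [Function.comp]
  rw [h2]

lemma sfn_id {X : Matrix m m ℂ} (hX : X.IsHermitian) : sfn hX (fun x => x) = X :=
  (hX.spectral_theorem).symm

lemma sfn_posSemidef {X : Matrix m m ℂ} (hX : X.IsHermitian) {f : ℝ → ℝ}
    (hf : ∀ x, 0 ≤ f x) : (sfn hX f).PosSemidef := by
  apply PosSemidef.mul_mul_conjTranspose_same
  refine posSemidef_diagonal_iff.mpr fun i ↦ ?_
  rw [Function.comp_apply, RCLike.nonneg_iff]
  constructor
  · simpa using hf _
  · simp

lemma sfn_isHermitian {X : Matrix m m ℂ} (hX : X.IsHermitian) (f : ℝ → ℝ) :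
    (sfn hX f).IsHermitian := by
  have := (sfn_posSemidef hX (f := fun x => f x + |f x| + 1) (fun x => by show (0:ℝ) ≤ f x + |f x| + 1; linarith [neg_abs_le (f x), abs_nonneg (f x)])).isHermitian
  have h2 := (sfn_posSemidef hX (f := fun x => |f x| + 1) (fun x => by show (0:ℝ) ≤ |f x| + 1; positivity)).isHermitian
  have h3 : sfn hX f = sfn hX (fun x => f x + |f x| + 1) - sfn hX (fun x => |f x| + 1) := by
    unfold sfn
    rw [← sub_mul, ← mul_sub, diagonal_sub]
    have h4 : (fun i => ((↑) ∘ (fun x => f x + |f x| + 1) ∘ hX.eigenvalues : m → ℂ) i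
          - ((↑) ∘ (fun x => |f x| + 1) ∘ hX.eigenvalues : m → ℂ) i)
        = ((↑) ∘ f ∘ hX.eigenvalues : m → ℂ) := by
      funext i; simp [Function.comp]
    rw [h4]
  rw [h3]
  exact this.sub h2

lemma sfn_add {X : Matrix m m ℂ} (hX : X.IsHermitian) (f g : ℝ → ℝ) :
    sfn hX f + sfn hX g = sfn hX (fun x => f x + g x) := by
  unfold sfn
  rw [← add_mul, ← mul_add, diagonal_add]
  have h2 : (fun i => ((↑) ∘ f ∘ hX.eigenvalues : m → ℂ) i + ((↑) ∘ g ∘ hX.eigenvalues : m → ℂ) i)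
      = ((↑) ∘ (fun x => f x + g x) ∘ hX.eigenvalues : m → ℂ) := by
    funext i; simp [Function.comp]
  rw [h2]

lemma sfn_trace {X : Matrix m m ℂ} (hX : X.IsHermitian) (f : ℝ → ℝ) :
    (sfn hX f).trace = ((∑ i, f (hX.eigenvalues i) : ℝ) : ℂ) := by
  have hU : (star hX.eigenvectorUnitary : Matrix m m ℂ) *
      (hX.eigenvectorUnitary : Matrix m m ℂ) = 1 :=
    (Matrix.mem_unitaryGroup_iff').mp hX.eigenvectorUnitary.2
  unfold sfn
  rw [trace_mul_cycle, hU, one_mul, trace_diagonal]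
  push_cast
  rfl

lemma sfn_eq_sqrt {X : Matrix m m ℂ} (hX : X.IsHermitian) :
    sfn hX (fun x => |x|) = (Matrix.posSemidef_conjTranspose_mul_self X).sqrt := by
  apply PosSemidef.eq_sqrt_of_sq_eq (sfn_posSemidef hX (fun x => abs_nonneg x))
  rw [pow_two, sfn_mul]
  have : (fun x : ℝ => |x| * |x|) = fun x => x * x := by ext x; exact abs_mul_abs_self x
  rw [this, ← sfn_mul, sfn_id, hX.eq]

lemma traceNorm_eq_sum_abs {X : Matrix m m ℂ} (hX : X.IsHermitian) :
    traceNorm X = ∑ i, |hX.eigenvalues i| := by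
  rw [traceNorm_eq_sqrt]
  rw [← sfn_eq_sqrt hX, sfn_trace]
  simp


open Kronecker in
lemma kron_conjT {I J : Type} (A : Matrix I I ℂ) (B : Matrix J J ℂ) :
    (A ⊗ₖ B)ᴴ = Aᴴ ⊗ₖ Bᴴ := by
  ext p q
  simp [conjTranspose_apply, Matrix.kroneckerMap_apply]

open Kronecker in
lemma psd_kron {I J : Type} [Fintype I] [Fintype J] {A : Matrix I I ℂ} {B : Matrix J J ℂ}
    (hA : A.PosSemidef) (hB : B.PosSemidef) : (A ⊗ₖ B).PosSemidef := by
  classical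
  obtain ⟨C, rfl⟩ := posSemidef_iff_eq_transpose_mul_self.mp hA
  obtain ⟨D, rfl⟩ := posSemidef_iff_eq_transpose_mul_self.mp hB
  rw [Matrix.mul_kronecker_mul, ← kron_conjT]
  exact posSemidef_conjTranspose_mul_self _

lemma psd_diag_nonneg {P : Matrix m m ℂ} (hP : P.PosSemidef) (i : m) : 0 ≤ P i i := by
  exact hP.diag_nonneg

lemma psd_trace_real {P : Matrix m m ℂ} (hP : P.PosSemidef) :
    P.trace = ((P.trace.re : ℝ) : ℂ) ∧ 0 ≤ P.trace.re := by
  have h : (0:ℂ) ≤ P.trace := by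
    rw [Matrix.trace]
    exact Finset.sum_nonneg fun i _ => psd_diag_nonneg hP i
  rw [Complex.le_def] at h
  obtain ⟨h1, h2⟩ := h
  refine ⟨Complex.ext ?_ ?_, by simpa using h1⟩
  · simp
  · simpa using h2.symm

lemma trace_mul_re_nonneg {S T : Matrix m m ℂ} (hS : S.PosSemidef) (hT : T.PosSemidef) :
    0 ≤ ((S * T).trace).re := by
  obtain ⟨C, rfl⟩ := posSemidef_iff_eq_transpose_mul_self.mp hS
  obtain ⟨D, rfl⟩ := posSemidef_iff_eq_transpose_mul_self.mp hT
  have h : (Cᴴ * C * (Dᴴ * D)).trace = ((C * Dᴴ)ᴴ * (C * Dᴴ)).trace := by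
    rw [conjTranspose_mul, conjTranspose_conjTranspose]
    rw [show Cᴴ * C * (Dᴴ * D) = (Cᴴ * C * Dᴴ) * D by noncomm_ring,
      show D * Cᴴ * (C * Dᴴ) = D * (Cᴴ * C * Dᴴ) by noncomm_ring]
    exact trace_mul_comm _ _
  rw [h]
  exact (psd_trace_real (posSemidef_conjTranspose_mul_self _)).2

lemma sfn_one {X : Matrix m m ℂ} (hX : X.IsHermitian) : sfn hX (fun _ => 1) = 1 := by
  unfold sfn
  have h2 : ((↑) ∘ (fun _ : ℝ => (1:ℝ)) ∘ hX.eigenvalues : m → ℂ) = fun _ => 1 := by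
    funext i; simp [Function.comp]
  rw [h2, diagonal_one, mul_one]
  exact (Matrix.mem_unitaryGroup_iff).mp hX.eigenvectorUnitary.2

lemma traceNorm_psd {P : Matrix m m ℂ} (hP : P.PosSemidef) : traceNorm P = P.trace.re := by
  rw [traceNorm_eq_sum_abs hP.1]
  have h := sfn_trace hP.1 (fun x => x)
  rw [sfn_id hP.1] at h
  rw [h]
  simp only [Complex.ofReal_re]
  exact Finset.sum_congr rfl fun i _ => abs_of_nonneg (hP.eigenvalues_nonneg i)

lemma re_trace_le_traceNorm {X : Matrix m m ℂ} (hX : X.IsHermitian) :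
    |X.trace.re| ≤ traceNorm X := by
  have h := sfn_trace hX (fun x => x)
  rw [sfn_id hX] at h
  rw [traceNorm_eq_sum_abs hX, h]
  simpa using Finset.abs_sum_le_sum_abs (fun i => hX.eigenvalues i) Finset.univ

/-- Key inequality: the trace norm of a difference of PSD matrices. -/
lemma traceNorm_sub_le {A B : Matrix m m ℂ} (hA : A.PosSemidef) (hB : B.PosSemidef) :
    traceNorm (A - B) ≤ (A.trace).re + (B.trace).re := by
  have hX : (A - B).IsHermitian := hA.1.sub hB.1
  set lam := hX.eigenvalues with hlam
  set p : ℝ → ℝ := fun x => if 0 ≤ x then 1 else 0 with hp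
  set q : ℝ → ℝ := fun x => if 0 ≤ x then 0 else 1 with hq
  have hpn : ∀ x, 0 ≤ p x := fun x => by rw [hp]; dsimp only; split <;> norm_num
  have hqn : ∀ x, 0 ≤ q x := fun x => by rw [hq]; dsimp only; split <;> norm_num
  have hPSp := sfn_posSemidef hX hpn
  have hPSq := sfn_posSemidef hX hqn
  have hid : sfn hX (fun x => x) = A - B := sfn_id hX
  -- trace identities
  have key : ∀ f : ℝ → ℝ, (sfn hX f * (A - B)).trace
      = ((∑ i, f (lam i) * lam i : ℝ) : ℂ) := by
    intro f
    have hh : (sfn hX f * (A - B)).trace = (sfn hX f * sfn hX (fun x => x)).trace := by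
      rw [hid]
    rw [hh, sfn_mul, sfn_trace]
  have e1 : ((sfn hX p * (A - B)).trace).re = ∑ i, max (lam i) 0 := by
    rw [key p]
    simp only [Complex.ofReal_re]
    refine Finset.sum_congr rfl fun i _ => ?_
    rw [hp]; dsimp only
    rcases le_or_gt 0 (lam i) with h | h
    · rw [if_pos h, max_eq_left h, one_mul]
    · rw [if_neg (not_le.mpr h), max_eq_right h.le, zero_mul]
  have e2 : ((sfn hX q * (A - B)).trace).re = -∑ i, max (-lam i) 0 := by
    rw [key q]
    simp only [Complex.ofReal_re]
    rw [← Finset.sum_neg_distrib]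
    refine Finset.sum_congr rfl fun i _ => ?_
    rw [hq]; dsimp only
    rcases le_or_gt 0 (lam i) with h | h
    · rw [if_pos h, zero_mul, max_eq_right (by linarith), neg_zero]
    · rw [if_neg (not_le.mpr h), one_mul, max_eq_left (by linarith)]
      ring
  have habs : traceNorm (A - B) = ∑ i, (max (lam i) 0 + max (-lam i) 0) := by
    rw [traceNorm_eq_sum_abs hX]
    refine Finset.sum_congr rfl fun i _ => ?_
    rcases le_or_gt 0 (lam i) with h | h
    · rw [abs_of_nonneg h, max_eq_left h, max_eq_right (by linarith), add_zero]
    · rw [abs_of_neg h, max_eq_right h.le, max_eq_left (by linarith), zero_add]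
  -- bounds
  have bp1 : ((sfn hX p * A).trace).re ≤ (A.trace).re := by
    have h1 : 0 ≤ ((sfn hX q * A).trace).re := trace_mul_re_nonneg hPSq hA
    have h2 : sfn hX p * A + sfn hX q * A = A := by
      rw [← add_mul, sfn_add]
      have : (fun x => p x + q x) = fun _ : ℝ => (1:ℝ) := by
        funext x; rw [hp, hq]; dsimp only; split <;> norm_num
      rw [this, sfn_one, one_mul]
    have := congrArg (fun M => (Matrix.trace M).re) h2
    simp only [trace_add, Complex.add_re] at this
    linarith
  have bp2 : 0 ≤ ((sfn hX p * B).trace).re := trace_mul_re_nonneg hPSp hB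
  have bq1 : ((sfn hX q * B).trace).re ≤ (B.trace).re := by
    have h1 : 0 ≤ ((sfn hX p * B).trace).re := trace_mul_re_nonneg hPSp hB
    have h2 : sfn hX p * B + sfn hX q * B = B := by
      rw [← add_mul, sfn_add]
      have : (fun x => p x + q x) = fun _ : ℝ => (1:ℝ) := by
        funext x; rw [hp, hq]; dsimp only; split <;> norm_num
      rw [this, sfn_one, one_mul]
    have := congrArg (fun M => (Matrix.trace M).re) h2
    simp only [trace_add, Complex.add_re] at this
    linarith
  have bq2 : 0 ≤ ((sfn hX q * A).trace).re := trace_mul_re_nonneg hPSq hA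
  have split1 : ((sfn hX p * (A - B)).trace).re
      = ((sfn hX p * A).trace).re - ((sfn hX p * B).trace).re := by
    rw [mul_sub, trace_sub, Complex.sub_re]
  have split2 : ((sfn hX q * (A - B)).trace).re
      = ((sfn hX q * A).trace).re - ((sfn hX q * B).trace).re := by
    rw [mul_sub, trace_sub, Complex.sub_re]
  have hsum : traceNorm (A - B)
      = ((sfn hX p * (A - B)).trace).re - ((sfn hX q * (A - B)).trace).re := by
    rw [habs, e1, e2, Finset.sum_add_distrib]
    ring
  rw [hsum, split1, split2]
  linarith

lemma trace_submatrix_equiv' {p : Type} [Fintype p] [DecidableEq p] (e : p ≃ m)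
    (S : Matrix m m ℂ) : (S.submatrix e e).trace = S.trace := by
  rw [Matrix.trace, Matrix.trace]
  exact Fintype.sum_equiv e _ _ (fun i => rfl)

lemma traceNorm_submatrix {p : Type} [Fintype p] [DecidableEq p] (e : p ≃ m)
    (M : Matrix m m ℂ) : traceNorm (M.submatrix e e) = traceNorm M := by
  have hS := Matrix.posSemidef_conjTranspose_mul_self M
  have h1 : (M.submatrix e e)ᴴ * (M.submatrix e e) = (Mᴴ * M).submatrix e e := by
    rw [conjTranspose_submatrix, submatrix_mul_equiv]
  have hpsd : ((hS.sqrt).submatrix e e).PosSemidef := hS.posSemidef_sqrt.submatrix e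
  have hsq : ((hS.sqrt).submatrix e e) ^ 2 = (M.submatrix e e)ᴴ * (M.submatrix e e) := by
    rw [h1, pow_two, submatrix_mul_equiv, PosSemidef.sqrt_mul_self]
  have h2 := hpsd.eq_sqrt_of_sq_eq (Matrix.posSemidef_conjTranspose_mul_self _) hsq
  rw [traceNorm_eq_sqrt, traceNorm_eq_sqrt]
  rw [← h2, trace_submatrix_equiv']

open Kronecker in
lemma traceNorm_kron {I J : Type} [Fintype I] [DecidableEq I] [Fintype J] [DecidableEq J]
    (A : Matrix I I ℂ) (B : Matrix J J ℂ) :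
    traceNorm (A ⊗ₖ B) = traceNorm A * traceNorm B := by
  have hS := Matrix.posSemidef_conjTranspose_mul_self A
  have hT := Matrix.posSemidef_conjTranspose_mul_self B
  have hkr : (A ⊗ₖ B)ᴴ * (A ⊗ₖ B) = (Aᴴ * A) ⊗ₖ (Bᴴ * B) := by
    rw [kron_conjT, Matrix.mul_kronecker_mul]
  have hpsd : (hS.sqrt ⊗ₖ hT.sqrt).PosSemidef :=
    psd_kron hS.posSemidef_sqrt hT.posSemidef_sqrt
  have hsq : (hS.sqrt ⊗ₖ hT.sqrt) ^ 2 = (A ⊗ₖ B)ᴴ * (A ⊗ₖ B) := by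
    rw [pow_two, ← Matrix.mul_kronecker_mul, PosSemidef.sqrt_mul_self,
      PosSemidef.sqrt_mul_self, hkr]
  have h2 := hpsd.eq_sqrt_of_sq_eq (Matrix.posSemidef_conjTranspose_mul_self _) hsq
  rw [traceNorm_eq_sqrt, traceNorm_eq_sqrt, traceNorm_eq_sqrt]
  rw [← h2, Matrix.trace_kronecker]
  rw [(psd_trace_real hS.posSemidef_sqrt).1, (psd_trace_real hT.posSemidef_sqrt).1,
    ← Complex.ofReal_mul]
  simp

lemma traceNorm_one' {I : Type} [Fintype I] [DecidableEq I] :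
    traceNorm (1 : Matrix I I ℂ) = (Fintype.card I : ℝ) := by
  have h0 : ((1 : Matrix I I ℂ))ᴴ * 1 = 1 := by rw [Matrix.conjTranspose_one, one_mul]
  have h2 := (Matrix.PosSemidef.one (R := ℂ) (n := I)).eq_sqrt_of_sq_eq
    (Matrix.posSemidef_conjTranspose_mul_self (1 : Matrix I I ℂ))
    (by rw [pow_two, one_mul, h0])
  rw [traceNorm_eq_sqrt]
  rw [← h2, trace_one]
  simp

lemma psd_smul {M : Matrix m m ℂ} (hM : M.PosSemidef) {r : ℝ} (hr : 0 ≤ r) :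
    (((r : ℂ)) • M).PosSemidef := by
  exact hM.smul (Complex.zero_le_real.mpr hr)

lemma psd_sum {ι : Type} (s : Finset ι) (f : ι → Matrix m m ℂ)
    (h : ∀ i ∈ s, (f i).PosSemidef) : (∑ i ∈ s, f i).PosSemidef := by
  classical
  induction s using Finset.induction_on with
  | empty => simpa using Matrix.PosSemidef.zero
  | insert _ _ hnotmem ih =>
      rw [Finset.sum_insert hnotmem]
      exact (h _ (Finset.mem_insert_self _ _)).add
        (ih fun i hi => h i (Finset.mem_insert_of_mem hi))

section PT
variable {IA IB : Type} [Fintype IA] [Fintype IB] [DecidableEq IA] [DecidableEq IB]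

lemma ptB_ptB (X : BMat IA IB) : ptB (ptB X) = X := rfl

lemma ptB_add (X Y : BMat IA IB) : ptB (X + Y) = ptB X + ptB Y := rfl

lemma ptB_smul (c : ℂ) (X : BMat IA IB) : ptB (c • X) = c • ptB X := rfl

lemma ptB_sub (X Y : BMat IA IB) : ptB (X - Y) = ptB X - ptB Y := rfl

lemma ptB_trace (X : BMat IA IB) : (ptB X).trace = X.trace := rfl

lemma ptB_isHermitian {X : BMat IA IB} (hX : X.IsHermitian) : (ptB X).IsHermitian := by
  show _ᴴ = _
  ext p q
  have h := congrFun (congrFun hX.eq (p.1, q.2)) (q.1, p.2)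
  rw [Matrix.conjTranspose_apply] at h ⊢
  exact h

/-- The index swap used in the `tr (A · X^{T_B}) = tr (A^{T_B} · X)` identity. -/
def swapE (IA IB : Type) : ((IA × IB) × (IA × IB)) ≃ ((IA × IB) × (IA × IB)) where
  toFun x := ((x.1.1, x.2.2), (x.2.1, x.1.2))
  invFun x := ((x.1.1, x.2.2), (x.2.1, x.1.2))
  left_inv x := rfl
  right_inv x := rfl

lemma trace_mul_ptB (A X : BMat IA IB) : (A * ptB X).trace = (ptB A * X).trace := by
  have h1 : (A * ptB X).trace
      = ∑ x : (IA × IB) × (IA × IB), A x.1 x.2 * X (x.2.1, x.1.2) (x.1.1, x.2.2) := by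
    rw [Matrix.trace]
    simp only [Matrix.diag, Matrix.mul_apply, ptB]
    exact (Fintype.sum_prod_type
      (f := fun x : (IA × IB) × (IA × IB) => A x.1 x.2 * X (x.2.1, x.1.2) (x.1.1, x.2.2))).symm
  have h2 : (ptB A * X).trace
      = ∑ x : (IA × IB) × (IA × IB), A (x.1.1, x.2.2) (x.2.1, x.1.2) * X x.2 x.1 := by
    rw [Matrix.trace]
    simp only [Matrix.diag, Matrix.mul_apply, ptB]
    exact (Fintype.sum_prod_type
      (f := fun x : (IA × IB) × (IA × IB) => A (x.1.1, x.2.2) (x.2.1, x.1.2) * X x.2 x.1)).symm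
  rw [h1, h2]
  exact Fintype.sum_equiv (swapE IA IB) _ _ (fun x => rfl)

lemma ptB_tensorPow (ρ : BMat IA IB) (n : ℕ) :
    ptB (tensorPow ρ n) = tensorPow (ptB ρ) n := rfl

lemma tensorPow_zero (ρ : BMat IA IB) : tensorPow ρ 0 = 1 := by
  ext p q
  have hpq : p = q := Subsingleton.elim p q
  subst hpq
  simp [tensorPow, Matrix.one_apply]

/-- Split off the first tensor factor. -/
def splitE (IA IB : Type) (n : ℕ) :
    ((Fin (n+1) → IA) × (Fin (n+1) → IB)) ≃ ((IA × IB) × ((Fin n → IA) × (Fin n → IB))) where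
  toFun p := ((p.1 0, p.2 0), (Fin.tail p.1, Fin.tail p.2))
  invFun q := (Fin.cons q.1.1 q.2.1, Fin.cons q.1.2 q.2.2)
  left_inv p := by
    obtain ⟨a, b⟩ := p
    simp [Fin.cons_self_tail]
  right_inv q := by
    obtain ⟨⟨x, y⟩, u, v⟩ := q
    simp [Fin.tail_cons]

open Kronecker in
lemma tensorPow_succ (ρ : BMat IA IB) (n : ℕ) :
    tensorPow ρ (n+1) = (ρ ⊗ₖ tensorPow ρ n).submatrix (splitE IA IB n) (splitE IA IB n) := by
  ext p q
  simp only [tensorPow, Matrix.submatrix_apply, Matrix.kroneckerMap_apply, splitE,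
    Equiv.coe_fn_mk]
  rw [Fin.prod_univ_succ]
  rfl

lemma trace_tensorPow (ρ : BMat IA IB) (n : ℕ) : (tensorPow ρ n).trace = ρ.trace ^ n := by
  induction n with
  | zero =>
      rw [tensorPow_zero, trace_one, pow_zero]
      norm_num
  | succ n ih =>
      rw [tensorPow_succ, trace_submatrix_equiv', Matrix.trace_kronecker, ih, pow_succ]
      ring

lemma traceNorm_tensorPow (ρ : BMat IA IB) (n : ℕ) :
    traceNorm (tensorPow ρ n) = traceNorm ρ ^ n := by
  induction n with
  | zero =>
      rw [tensorPow_zero, traceNorm_one', pow_zero]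
      norm_num
  | succ n ih =>
      rw [tensorPow_succ, traceNorm_submatrix, traceNorm_kron, ih, pow_succ]
      ring

lemma isHermitian_tensorPow {ρ : BMat IA IB} (hρ : ρ.IsHermitian) (n : ℕ) :
    (tensorPow ρ n).IsHermitian := by
  show _ᴴ = _
  ext p q
  rw [Matrix.conjTranspose_apply]
  show star (∏ i, ρ (q.1 i, q.2 i) (p.1 i, p.2 i)) = ∏ i, ρ (p.1 i, p.2 i) (q.1 i, q.2 i)
  rw [star_prod]
  refine Finset.prod_congr rfl fun i _ => ?_
  have h := congrFun (congrFun hρ.eq (p.1 i, p.2 i)) (q.1 i, q.2 i)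
  rw [Matrix.conjTranspose_apply] at h
  exact h

end PT

section MESfacts
variable {d : ℕ}

/-- The swap operator. -/
def Sw (d : ℕ) : BMat (Fin d) (Fin d) := fun p q => if p.1 = q.2 ∧ q.1 = p.2 then 1 else 0

lemma Sw_eq_submatrix :
    Sw d = (1 : Matrix (Fin d × Fin d) (Fin d × Fin d) ℂ).submatrix
      id ⇑(Equiv.prodComm (Fin d) (Fin d)) := by
  ext p q
  simp only [Sw, Matrix.submatrix_apply, Matrix.one_apply, Equiv.prodComm_apply, id_eq]
  congr 1
  simp only [Prod.ext_iff, Prod.fst_swap, Prod.snd_swap, eq_iff_iff]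
  constructor
  · rintro ⟨h1, h2⟩; exact ⟨h1, h2.symm⟩
  · rintro ⟨h1, h2⟩; exact ⟨h1, h2.symm⟩

lemma Sw_mul_Sw : Sw d * Sw d = 1 := by
  have h2 : (1 : Matrix (Fin d × Fin d) (Fin d × Fin d) ℂ).submatrix
      id ⇑(Equiv.prodComm (Fin d) (Fin d))
      = (1 : Matrix (Fin d × Fin d) (Fin d × Fin d) ℂ).submatrix
        ⇑(Equiv.prodComm (Fin d) (Fin d)) id := by
    ext p q
    simp only [Matrix.submatrix_apply, Matrix.one_apply, Equiv.prodComm_apply, id_eq]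
    congr 1
    simp only [eq_iff_iff]
    constructor
    · intro h; rw [h]; simp
    · intro h; rw [← h]; simp
  rw [Sw_eq_submatrix]
  nth_rewrite 2 [h2]
  rw [Matrix.submatrix_mul_equiv, one_mul, Matrix.submatrix_id_id]

lemma Sw_isHermitian : (Sw d).IsHermitian := by
  show _ᴴ = _
  ext p q
  rw [Matrix.conjTranspose_apply]
  simp only [Sw]
  split_ifs with h1 h2 h2 <;> try simp
  · exact absurd ⟨h1.2, h1.1⟩ h2
  · exact absurd ⟨h2.2, h2.1⟩ h1

lemma MES_isHermitian (hd : 0 < d) : (MES d).IsHermitian := by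
  show _ᴴ = _
  ext p q
  rw [Matrix.conjTranspose_apply]
  simp only [MES]
  split_ifs with h1 h2 h2
  · simp [star_div₀]
  · exact absurd ⟨h1.2, h1.1⟩ h2
  · exact absurd ⟨h2.2, h2.1⟩ h1
  · simp

lemma ptB_MES (hd : 0 < d) : ptB (MES d) = ((d : ℂ))⁻¹ • Sw d := by
  ext p q
  simp only [ptB, MES, Sw, Matrix.smul_apply, smul_eq_mul]
  split_ifs with h
  · rw [one_div, mul_one]
  · rw [mul_zero]

lemma MES_trace (hd : 0 < d) : (MES d).trace = 1 := by
  have hdc : (d : ℂ) ≠ 0 := Nat.cast_ne_zero.mpr hd.ne'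
  rw [Matrix.trace]
  simp only [Matrix.diag, MES, and_self]
  rw [Fintype.sum_prod_type]
  simp only [Finset.sum_ite_eq, Finset.mem_univ, if_true]
  rw [Finset.sum_const]
  simp only [Finset.card_univ, Fintype.card_fin, nsmul_eq_mul]
  field_simp

lemma MES_idem (hd : 0 < d) : MES d * MES d = MES d := by
  have hdc : (d : ℂ) ≠ 0 := Nat.cast_ne_zero.mpr hd.ne'
  ext p q
  rw [Matrix.mul_apply]
  simp only [MES]
  rw [Fintype.sum_prod_type]
  by_cases hp : p.1 = p.2 <;> by_cases hq : q.1 = q.2 <;>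
    simp only [hp, hq, true_and, and_true, false_and, and_false, if_true, if_false,
      ite_mul, mul_ite, zero_mul, mul_zero, one_div] <;>
    simp [Finset.sum_ite_eq, hdc]

end MESfacts

section CP
variable {I J : Type} [Fintype I] [Fintype J] [DecidableEq I] [DecidableEq J]

lemma cp_pos {f : Matrix I I ℂ → Matrix J J ℂ} (hf : CompletelyPositive f)
    {A : Matrix I I ℂ} (hA : A.PosSemidef) : (f A).PosSemidef := by
  have hM : (A.submatrix ⇑(Equiv.uniqueProd I (Fin 1)) ⇑(Equiv.uniqueProd I (Fin 1))).PosSemidef :=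
    hA.submatrix _
  have hres := hf 1 _ hM
  have hext : extMap f 1 (A.submatrix ⇑(Equiv.uniqueProd I (Fin 1)) ⇑(Equiv.uniqueProd I (Fin 1)))
      = (f A).submatrix ⇑(Equiv.uniqueProd J (Fin 1)) ⇑(Equiv.uniqueProd J (Fin 1)) := by
    ext p q
    have hblk : (fun i i' => (A.submatrix ⇑(Equiv.uniqueProd I (Fin 1))
        ⇑(Equiv.uniqueProd I (Fin 1))) (p.1, i) (q.1, i')) = A := by
      ext i i'
      simp [Equiv.uniqueProd_apply]
    show f _ p.2 q.2 = f A _ _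
    rw [hblk]
    simp [Equiv.uniqueProd_apply, Matrix.submatrix_apply]
  rw [hext] at hres
  exact (Matrix.posSemidef_submatrix_equiv (Equiv.uniqueProd J (Fin 1))).mp hres

lemma extMap_add (f g : Matrix I I ℂ → Matrix J J ℂ) (k : ℕ)
    (M : Matrix (Fin k × I) (Fin k × I) ℂ) :
    extMap (fun X => f X + g X) k M = extMap f k M + extMap g k M := rfl

lemma cp_congr {f g : Matrix I I ℂ → Matrix J J ℂ} (h : ∀ X, f X = g X)
    (hf : CompletelyPositive f) : CompletelyPositive g := by
  have : f = g := funext h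
  rwa [this] at hf

lemma cp_add {f g : Matrix I I ℂ → Matrix J J ℂ} (hf : CompletelyPositive f)
    (hg : CompletelyPositive g) : CompletelyPositive (fun X => f X + g X) := by
  intro k M hM
  rw [extMap_add]
  exact (hf k M hM).add (hg k M hM)

lemma cp_measure_prepare {A : Matrix I I ℂ} {σ : Matrix J J ℂ}
    (hA : A.PosSemidef) (hσ : σ.PosSemidef) :
    CompletelyPositive (fun X => ((A * X).trace) • σ) := by
  intro k M hM
  classical
  obtain ⟨B, hB⟩ := posSemidef_iff_eq_transpose_mul_self.mp hA
  set c : Matrix (Fin k) (Fin k) ℂ :=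
    Matrix.of (fun a b => (A * (Matrix.of fun i i' => M (a, i) (b, i'))).trace) with hc
  have hkron : extMap (fun X => ((A * X).trace) • σ) k M
      = Matrix.kroneckerMap (· * ·) c σ := by
    ext p q
    rfl
  have hcpsd : c.PosSemidef := by
    set E : I → Matrix (Fin k × I) (Fin k) ℂ :=
      fun r => Matrix.of (fun (x : Fin k × I) (b : Fin k) =>
        if x.1 = b then star (B r x.2) else 0) with hE
    have hsum : c = ∑ r : I, ((E r)ᴴ * M * (E r)) := by
      ext a b
      rw [hc]
      simp only [Matrix.of_apply, Matrix.sum_apply, Matrix.trace, Matrix.diag,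
        Matrix.mul_apply, Matrix.conjTranspose_apply, hE, hB,
        apply_ite (star : ℂ → ℂ), star_star, star_zero, ite_mul, mul_ite, zero_mul, mul_zero,
        Fintype.sum_prod_type, Finset.sum_ite_irrel, Finset.sum_const_zero,
        Finset.sum_ite_eq', Finset.mem_univ, if_true]
      simp only [Finset.sum_mul, Finset.mul_sum]
      have hswap : ∀ (F : I → I → I → ℂ), (∑ x : I, ∑ y : I, ∑ r : I, F x y r)
          = ∑ r : I, ∑ x : I, ∑ y : I, F x y r := by
        intro F
        have h1 : ∀ x : I, (∑ y : I, ∑ r : I, F x y r) = ∑ r : I, ∑ y : I, F x y r :=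
          fun x => Finset.sum_comm
        simp_rw [h1]
        exact Finset.sum_comm
      rw [hswap]
      refine Finset.sum_congr rfl fun r _ => ?_
      refine Finset.sum_congr rfl fun i _ => ?_
      refine Finset.sum_congr rfl fun i' _ => ?_
      ring
    rw [hsum]
    exact psd_sum _ _ (fun r _ => hM.conjTranspose_mul_mul_same _)
  rw [hkron]
  exact psd_kron hcpsd hσ

end CP

section Proj
variable {d : ℕ}

lemma star_half : (star (2⁻¹ : ℂ)) = 2⁻¹ := by
  rw [star_inv₀]
  norm_num

lemma Pplus_isHermitian : (((2⁻¹ : ℂ) • (1 + Sw d))).IsHermitian := by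
  show _ᴴ = _
  rw [Matrix.conjTranspose_smul, star_half, Matrix.conjTranspose_add,
    Matrix.conjTranspose_one, Sw_isHermitian.eq]

lemma Pminus_isHermitian : (((2⁻¹ : ℂ) • (1 - Sw d))).IsHermitian := by
  show _ᴴ = _
  rw [Matrix.conjTranspose_smul, star_half, Matrix.conjTranspose_sub,
    Matrix.conjTranspose_one, Sw_isHermitian.eq]

lemma Pplus_psd : (((2⁻¹ : ℂ) • (1 + Sw d))).PosSemidef := by
  have hexp : ((1 : BMat (Fin d) (Fin d)) + Sw d) * (1 + Sw d) = (2:ℂ) • (1 + Sw d) := by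
    rw [add_mul, mul_add, mul_add, Sw_mul_Sw, two_smul]
    simp only [one_mul, mul_one]
    abel
  have hidem : ((2⁻¹ : ℂ) • (1 + Sw d)) * ((2⁻¹ : ℂ) • (1 + Sw d))
      = (2⁻¹ : ℂ) • (1 + Sw d) := by
    rw [Matrix.smul_mul, Matrix.mul_smul, smul_smul, hexp, smul_smul]
    norm_num
  have h3 := Matrix.posSemidef_conjTranspose_mul_self ((2⁻¹ : ℂ) • (1 + Sw d))
  rw [Pplus_isHermitian.eq, hidem] at h3
  exact h3

lemma Pminus_psd : (((2⁻¹ : ℂ) • (1 - Sw d))).PosSemidef := by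
  have hexp : ((1 : BMat (Fin d) (Fin d)) - Sw d) * (1 - Sw d) = (2:ℂ) • (1 - Sw d) := by
    rw [sub_mul, mul_sub, mul_sub, Sw_mul_Sw, two_smul]
    simp only [one_mul, mul_one]
    abel
  have hidem : ((2⁻¹ : ℂ) • (1 - Sw d)) * ((2⁻¹ : ℂ) • (1 - Sw d))
      = (2⁻¹ : ℂ) • (1 - Sw d) := by
    rw [Matrix.smul_mul, Matrix.mul_smul, smul_smul, hexp, smul_smul]
    norm_num
  have h3 := Matrix.posSemidef_conjTranspose_mul_self ((2⁻¹ : ℂ) • (1 - Sw d))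
  rw [Pminus_isHermitian.eq, hidem] at h3
  exact h3

lemma Pplus_sub_Pminus : ((2⁻¹ : ℂ) • (1 + Sw d)) - ((2⁻¹ : ℂ) • (1 - Sw d)) = Sw d := by
  rw [← smul_sub]
  have h : ((1 : BMat (Fin d) (Fin d)) + Sw d) - (1 - Sw d) = (2:ℂ) • Sw d := by
    rw [two_smul]; abel
  rw [h, smul_smul]
  norm_num

lemma Pplus_add_Pminus : ((2⁻¹ : ℂ) • (1 + Sw d)) + ((2⁻¹ : ℂ) • (1 - Sw d)) = 1 := by
  rw [← smul_add]
  have h : ((1 : BMat (Fin d) (Fin d)) + Sw d) + (1 - Sw d) = (2:ℂ) • 1 := by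
    rw [two_smul]; abel
  rw [h, smul_smul]
  norm_num

lemma Sw_trace : (Sw d).trace = (d : ℂ) := by
  rw [Matrix.trace]
  simp only [Matrix.diag, Sw, and_self]
  rw [Fintype.sum_prod_type]
  simp [Finset.sum_ite_eq, Finset.mem_univ]

end Proj

section Protocol
variable {IA IB : Type} [Fintype IA] [Fintype IB] [DecidableEq IA] [DecidableEq IB]

/-- The dilution channel. -/
noncomputable def dil (d : ℕ) (ρ' ω : BMat IA IB) : BMat (Fin d) (Fin d) →ₗ[ℂ] BMat IA IB :=
  ((Matrix.traceLinearMap (Fin d × Fin d) ℂ ℂ).comp (LinearMap.mulLeft ℂ (MES d))).smulRight ρ'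
    + (((Matrix.traceLinearMap (Fin d × Fin d) ℂ ℂ)
      - (Matrix.traceLinearMap (Fin d × Fin d) ℂ ℂ).comp
        (LinearMap.mulLeft ℂ (MES d))).smulRight ω)

lemma dil_apply (d : ℕ) (ρ' ω : BMat IA IB) (X : BMat (Fin d) (Fin d)) :
    dil d ρ' ω X = ((MES d * X).trace) • ρ' + (X.trace - (MES d * X).trace) • ω := by
  simp [dil, LinearMap.smulRight_apply, Matrix.traceLinearMap, LinearMap.mulLeft_apply,
    LinearMap.sub_apply]

lemma herm_smul {c : ℂ} (hc : star c = c) {H : Matrix (IA × IB) (IA × IB) ℂ}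
    (hH : H.IsHermitian) : (c • H).IsHermitian := by
  show _ᴴ = _
  rw [Matrix.conjTranspose_smul, hc, hH.eq]

lemma star_trace_mul_herm {Φ X : BMat IA IB} (hΦ : Φ.IsHermitian) (hX : X.IsHermitian) :
    star ((Φ * X).trace) = (Φ * X).trace := by
  rw [← Matrix.trace_conjTranspose, Matrix.conjTranspose_mul, hΦ.eq, hX.eq,
    Matrix.trace_mul_comm]

set_option maxHeartbeats 2000000 in
/-- Existence of an exact dilution protocol whenever `d ≥ ‖ρ'^{T_B}‖₁ + 1`. -/
lemma exists_dilution {ρ' : BMat IA IB} (hq : IsQuasiState ρ') {d : ℕ} (hd : 0 < d)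
    (hdZ : traceNorm (ptB ρ') + 1 ≤ (d : ℝ)) :
    ∃ Λ : BMat (Fin d) (Fin d) →ₗ[ℂ] BMat IA IB, IsPPTq Λ ∧ Λ (MES d) = ρ' := by
  obtain ⟨hherm, htr1⟩ := hq
  have hT : (ptB ρ').IsHermitian := ptB_isHermitian hherm
  set Z := traceNorm (ptB ρ') with hZdef
  set W := sfn hT (fun x => |x|) with hWdef
  have hWpsd : W.PosSemidef := sfn_posSemidef hT (fun x => abs_nonneg x)
  have hWtr : W.trace = (Z : ℂ) := by
    rw [hWdef, sfn_trace, hZdef, traceNorm_eq_sum_abs hT]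
  have hZ1 : 1 ≤ Z := by
    have h := re_trace_le_traceNorm hT
    rw [ptB_trace, htr1] at h
    simpa using h
  have hZpos : (0:ℝ) < Z := lt_of_lt_of_le one_pos hZ1
  have hZne : (Z : ℂ) ≠ 0 := by
    simpa using Complex.ofReal_ne_zero.mpr (ne_of_gt hZpos)
  have hdne : ((d:ℝ)) ≠ 0 := Nat.cast_ne_zero.mpr hd.ne'
  have hdnec : ((d:ℂ)) ≠ 0 := Nat.cast_ne_zero.mpr hd.ne'
  set ω : BMat IA IB := ptB (((Z : ℂ))⁻¹ • W) with hωdef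
  have hωherm : ω.IsHermitian := by
    apply ptB_isHermitian
    apply herm_smul
    · simp [Complex.star_def, ← Complex.ofReal_inv, Complex.conj_ofReal]
    · exact sfn_isHermitian hT _
  have hωtr : ω.trace = 1 := by
    rw [hωdef, ptB_trace, Matrix.trace_smul, hWtr, smul_eq_mul, inv_mul_cancel₀ hZne]
  have hMtr : (MES d).trace = 1 := MES_trace hd
  have hMMtr : (MES d * MES d).trace = 1 := by rw [MES_idem hd, hMtr]
  refine ⟨dil d ρ' ω, ⟨?_, ?_, ?_⟩, ?_⟩
  · -- Hermitian preserving
    intro X hX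
    rw [dil_apply]
    have h1 := star_trace_mul_herm (MES_isHermitian hd) hX
    have h2 : star X.trace = X.trace := by
      rw [← Matrix.trace_conjTranspose, hX.eq]
    exact (herm_smul h1 hherm).add (herm_smul (by rw [star_sub, h1, h2]) hωherm)
  · -- trace preserving
    intro X
    rw [dil_apply, Matrix.trace_add, Matrix.trace_smul, Matrix.trace_smul, htr1, hωtr]
    simp
  · -- complete positivity
    set c1 : ℝ := ((d:ℝ) - 1 - Z) / ((d:ℝ) * Z) with hc1
    set c2 : ℝ := ((d:ℝ) + 1 - Z) / ((d:ℝ) * Z) with hc2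
    have hc1n : 0 ≤ c1 := by
      apply div_nonneg _ (by positivity)
      linarith
    have hc2n : 0 ≤ c2 := by
      apply div_nonneg _ (by positivity)
      linarith
    set σp : BMat IA IB := (((d:ℝ)⁻¹ : ℝ) : ℂ) • (ptB ρ' + W) + ((c1 : ℝ) : ℂ) • W with hσp
    set σm : BMat IA IB := (((d:ℝ)⁻¹ : ℝ) : ℂ) • (W - ptB ρ') + ((c2 : ℝ) : ℂ) • W with hσm
    have hTplusW : (ptB ρ' + W).PosSemidef := by
      have h := sfn_add hT (fun x => x) (fun x => |x|)
      rw [sfn_id] at h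
      rw [hWdef, h]
      exact sfn_posSemidef hT (fun x => by linarith [neg_abs_le x])
    have hWminusT : (W - ptB ρ').PosSemidef := by
      have h := sfn_add hT (fun x => |x| - x) (fun x => x)
      rw [sfn_id] at h
      have h2 : (fun x => |x| - x + x) = fun x : ℝ => |x| := by funext x; ring
      rw [h2] at h
      rw [← hWdef] at h
      rw [← eq_sub_of_add_eq h]
      exact sfn_posSemidef hT (fun x => by linarith [le_abs_self x])
    have hdinv : (0:ℝ) ≤ (d:ℝ)⁻¹ := by positivity
    have hσppsd : σp.PosSemidef := (psd_smul hTplusW hdinv).add (psd_smul hWpsd hc1n)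
    have hσmpsd : σm.PosSemidef := (psd_smul hWminusT hdinv).add (psd_smul hWpsd hc2n)
    refine cp_congr (f := fun X => (((((2⁻¹ : ℂ) • (1 + Sw d)) * X).trace) • σp
        + ((((2⁻¹ : ℂ) • (1 - Sw d)) * X).trace) • σm)) (fun X => ?_)
      (cp_add (cp_measure_prepare Pplus_psd hσppsd) (cp_measure_prepare Pminus_psd hσmpsd))
    show ((((2⁻¹ : ℂ) • (1 + Sw d)) * X).trace) • σp
        + ((((2⁻¹ : ℂ) • (1 - Sw d)) * X).trace) • σm = ptB ((dil d ρ' ω) (ptB X))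
    have htx : (ptB X).trace = X.trace := ptB_trace X
    have hMX : (MES d * ptB X).trace = ((d:ℂ))⁻¹ * (Sw d * X).trace := by
      rw [trace_mul_ptB, ptB_MES hd, Matrix.smul_mul, Matrix.trace_smul, smul_eq_mul]
    have hSX : (Sw d * X).trace = ((((2⁻¹ : ℂ) • (1 + Sw d)) * X).trace)
        - ((((2⁻¹ : ℂ) • (1 - Sw d)) * X).trace) := by
      rw [← Matrix.trace_sub, ← Matrix.sub_mul, Pplus_sub_Pminus]
    have hX1 : X.trace = ((((2⁻¹ : ℂ) • (1 + Sw d)) * X).trace)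
        + ((((2⁻¹ : ℂ) • (1 - Sw d)) * X).trace) := by
      rw [← Matrix.trace_add, ← Matrix.add_mul, Pplus_add_Pminus, one_mul]
    rw [dil_apply, hωdef, ptB_add, ptB_smul, ptB_smul, ptB_ptB, hMX, hSX, htx, hX1,
      hσp, hσm, hc1, hc2]
    push_cast
    match_scalars <;> field_simp <;> ring
  · -- output
    rw [dil_apply, hMMtr, hMtr]
    simp
end Protocol

/-- Converse: any exact dilution protocol requires `d ≥ ‖ρ'^{T_B}‖₁`. -/
lemma cost_lower {IA IB : Type} [Fintype IA] [Fintype IB] [DecidableEq IA] [DecidableEq IB]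
    {ρ' : BMat IA IB} {d : ℕ} (hd : 0 < d)
    (Λ : BMat (Fin d) (Fin d) →ₗ[ℂ] BMat IA IB) (hΛ : IsPPTq Λ) (hout : Λ (MES d) = ρ') :
    traceNorm (ptB ρ') ≤ (d : ℝ) := by
  obtain ⟨hherm, htr, hcp⟩ := hΛ
  have hdne : ((d:ℝ)) ≠ 0 := Nat.cast_ne_zero.mpr hd.ne'
  have hdpos : (0:ℝ) < (d:ℝ) := by exact_mod_cast hd
  have hcast : ((d:ℂ))⁻¹ = (((d:ℝ)⁻¹ : ℝ) : ℂ) := by push_cast; ring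
  have hgp : (ptB (Λ (ptB ((2⁻¹ : ℂ) • (1 + Sw d))))).PosSemidef := cp_pos hcp Pplus_psd
  have hgm : (ptB (Λ (ptB ((2⁻¹ : ℂ) • (1 - Sw d))))).PosSemidef := cp_pos hcp Pminus_psd
  have hdecomp : ptB ρ' = (((d:ℝ)⁻¹ : ℝ) : ℂ) • ptB (Λ (ptB ((2⁻¹ : ℂ) • (1 + Sw d))))
      - (((d:ℝ)⁻¹ : ℝ) : ℂ) • ptB (Λ (ptB ((2⁻¹ : ℂ) • (1 - Sw d)))) := by
    have h0 : MES d = ((d:ℂ))⁻¹ • ptB (Sw d) := by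
      calc MES d = ptB (ptB (MES d)) := (ptB_ptB _).symm
        _ = ptB (((d:ℂ))⁻¹ • Sw d) := by rw [ptB_MES hd]
        _ = ((d:ℂ))⁻¹ • ptB (Sw d) := ptB_smul _ _
    have hSw : ptB (Sw d) = ptB (((2⁻¹ : ℂ) • (1 + Sw d)) - ((2⁻¹ : ℂ) • (1 - Sw d))) := by
      rw [Pplus_sub_Pminus]
    rw [← hout, h0, hSw, ptB_sub, _root_.map_smul, map_sub, ptB_smul, ptB_sub, hcast, smul_sub]
  have hle := traceNorm_sub_le
    (psd_smul hgp (inv_nonneg.mpr hdpos.le)) (psd_smul hgm (inv_nonneg.mpr hdpos.le))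
  rw [← hdecomp] at hle
  -- compute the traces
  have htrP : ∀ M : BMat (Fin d) (Fin d),
      ((((d:ℝ)⁻¹ : ℝ) : ℂ) • ptB (Λ (ptB M))).trace = (((d:ℝ)⁻¹ : ℝ) : ℂ) * M.trace := by
    intro M
    rw [Matrix.trace_smul, smul_eq_mul, ptB_trace, htr, ptB_trace]
  have htp : ((2⁻¹ : ℂ) • (1 + Sw d)).trace = ((((d:ℝ) * d + d) / 2 : ℝ) : ℂ) := by
    rw [Matrix.trace_smul, Matrix.trace_add, Matrix.trace_one, Sw_trace, smul_eq_mul,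
      Fintype.card_prod, Fintype.card_fin]
    push_cast
    ring
  have htm : ((2⁻¹ : ℂ) • (1 - Sw d)).trace = ((((d:ℝ) * d - d) / 2 : ℝ) : ℂ) := by
    rw [Matrix.trace_smul, Matrix.trace_sub, Matrix.trace_one, Sw_trace, smul_eq_mul,
      Fintype.card_prod, Fintype.card_fin]
    push_cast
    ring
  rw [htrP, htrP, htp, htm, ← Complex.ofReal_mul, ← Complex.ofReal_mul,
    Complex.ofReal_re, Complex.ofReal_re] at hle
  calc traceNorm (ptB ρ') ≤ (d:ℝ)⁻¹ * (((d:ℝ) * d + d) / 2) + (d:ℝ)⁻¹ * (((d:ℝ) * d - d) / 2) :=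
        hle
    _ = (d : ℝ) := by field_simp; ring

end EC

/-- The exact entanglement cost under PPTq operations equals
the logarithmic negativity: `lim_{n→∞} (1/n)·E^{(1)}_{0,C,PPTq}(ρ^{⊗n}) = E_N(ρ)`. -/
theorem exactCost_eq_EN {dA dB : ℕ}
    (ρ : BMat (Fin dA) (Fin dB)) (hρ : IsQuasiState ρ) :
    Filter.Tendsto (fun n : ℕ => (1 / n : ℝ) * oneShotCost (tensorPow ρ n))
      Filter.atTop (nhds (EN ρ)) := by
  obtain ⟨hherm, htr1⟩ := hρ
  have hTherm : (ptB ρ).IsHermitian := EC.ptB_isHermitian hherm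
  set Z := traceNorm (ptB ρ) with hZdef
  have hZ1 : 1 ≤ Z := by
    have h := EC.re_trace_le_traceNorm hTherm
    rw [EC.ptB_trace, htr1] at h
    simpa using h
  have hZpos : (0:ℝ) < Z := lt_of_lt_of_le one_pos hZ1
  have hENZ : EN ρ = Real.logb 2 Z := rfl
  have key : ∀ n : ℕ, 0 < n →
      (n : ℝ) * Real.logb 2 Z ≤ oneShotCost (tensorPow ρ n) ∧
      oneShotCost (tensorPow ρ n) ≤ (n : ℝ) * Real.logb 2 Z + Real.logb 2 3 := by
    intro n hn
    have hZn : traceNorm (ptB (tensorPow ρ n)) = Z ^ n := by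
      rw [EC.ptB_tensorPow, EC.traceNorm_tensorPow]
    have hZnpow : (1:ℝ) ≤ Z ^ n := one_le_pow₀ hZ1
    have hZnpos : (0:ℝ) < Z ^ n := by positivity
    have hlb : ∀ x ∈ { x : ℝ | ∃ d : ℕ, 0 < d ∧ x = Real.logb 2 d ∧
        ∃ Λ : BMat (Fin d) (Fin d) →ₗ[ℂ] BMat (Fin n → Fin dA) (Fin n → Fin dB),
          IsPPTq Λ ∧ Λ (MES d) = tensorPow ρ n },
        (n : ℝ) * Real.logb 2 Z ≤ x := by
      rintro x ⟨d, hd, rfl, Λ, hΛ, hΛρ⟩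
      have hZd : Z ^ n ≤ (d : ℝ) := by
        have h := EC.cost_lower hd Λ hΛ hΛρ
        rwa [hZn] at h
      have h1 : Real.logb 2 (Z ^ n) ≤ Real.logb 2 d :=
        Real.logb_le_logb_of_le (by norm_num) hZnpos hZd
      rwa [Real.logb_pow] at h1
    set dn : ℕ := ⌈Z ^ n⌉₊ + 1 with hdn
    have hdnpos : 0 < dn := Nat.succ_pos _
    have hdnge : traceNorm (ptB (tensorPow ρ n)) + 1 ≤ (dn : ℝ) := by
      rw [hZn, hdn]
      push_cast
      have h := Nat.le_ceil (Z ^ n)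
      linarith
    have hquasi : IsQuasiState (tensorPow ρ n) :=
      ⟨EC.isHermitian_tensorPow hherm n, by rw [EC.trace_tensorPow, htr1, one_pow]⟩
    obtain ⟨Λ, hΛ, hΛρ⟩ := EC.exists_dilution hquasi hdnpos hdnge
    have hmem : Real.logb 2 dn ∈ { x : ℝ | ∃ d : ℕ, 0 < d ∧ x = Real.logb 2 d ∧
        ∃ Λ : BMat (Fin d) (Fin d) →ₗ[ℂ] BMat (Fin n → Fin dA) (Fin n → Fin dB),
          IsPPTq Λ ∧ Λ (MES d) = tensorPow ρ n } := ⟨dn, hdnpos, rfl, Λ, hΛ, hΛρ⟩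
    have hbdd : BddBelow { x : ℝ | ∃ d : ℕ, 0 < d ∧ x = Real.logb 2 d ∧
        ∃ Λ : BMat (Fin d) (Fin d) →ₗ[ℂ] BMat (Fin n → Fin dA) (Fin n → Fin dB),
          IsPPTq Λ ∧ Λ (MES d) = tensorPow ρ n } := ⟨(n : ℝ) * Real.logb 2 Z, hlb⟩
    constructor
    · exact le_csInf ⟨_, hmem⟩ hlb
    · have h2 : oneShotCost (tensorPow ρ n) ≤ Real.logb 2 dn := csInf_le hbdd hmem
      have h3 : (dn : ℝ) ≤ 3 * Z ^ n := by
        have hceil : (⌈Z ^ n⌉₊ : ℝ) < Z ^ n + 1 := Nat.ceil_lt_add_one hZnpos.le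
        rw [hdn]
        push_cast
        nlinarith [hZnpow]
      have h4 : Real.logb 2 (dn : ℝ) ≤ Real.logb 2 (3 * Z ^ n) :=
        Real.logb_le_logb_of_le (by norm_num) (by positivity) h3
      rw [Real.logb_mul (by norm_num) (by positivity), Real.logb_pow] at h4
      refine le_trans h2 (le_trans h4 ?_)
      rw [add_comm]
  have hup : Filter.Tendsto (fun n : ℕ => Real.logb 2 Z + (1 / (n:ℝ)) * Real.logb 2 3)
      Filter.atTop (nhds (EN ρ)) := by
    rw [hENZ]
    have h := (tendsto_one_div_atTop_nhds_zero_nat.mul_const (Real.logb 2 3)).const_add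
      (Real.logb 2 Z)
    simpa using h
  apply tendsto_of_tendsto_of_tendsto_of_le_of_le' tendsto_const_nhds hup
  · filter_upwards [Filter.eventually_ge_atTop 1] with n hn
    have hn' : (0:ℝ) < n := by exact_mod_cast hn
    have h := (key n hn).1
    rw [hENZ]
    calc Real.logb 2 Z = (1/(n:ℝ)) * ((n:ℝ) * Real.logb 2 Z) := by field_simp
      _ ≤ (1/(n:ℝ)) * oneShotCost (tensorPow ρ n) :=
          mul_le_mul_of_nonneg_left h (by positivity)
  · filter_upwards [Filter.eventually_ge_atTop 1] with n hn
    have hn' : (0:ℝ) < n := by exact_mod_cast hn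
    have h := (key n hn).2
    calc (1/(n:ℝ)) * oneShotCost (tensorPow ρ n)
        ≤ (1/(n:ℝ)) * ((n:ℝ) * Real.logb 2 Z + Real.logb 2 3) :=
          mul_le_mul_of_nonneg_left h (by positivity)
      _ = Real.logb 2 Z + (1/(n:ℝ)) * Real.logb 2 3 := by
          field_simp

end
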